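/- Let C be a linear code of length n over a finite commutative Frobenius ring R. Let A be the (t+1)×(t+1) 0–1 matrix with A_{ij} = 1 iff a_iR ⊆ a_jR, D = diag(|a_0R|, …, |a_tR|), and Q the 0–1 matrix with Q_{ij} = 1 iff a_jR ⊆ (a_iR)⊥ = {r ∈ R : a_i r = 0}. Then sse_{C⊥}(X) = (1/|C|) · sse_C(Q D A^{−1} X), as an identity of polynomials in the variables x_{iℓ} (i ∈ {0,…,t}, ℓ ∈ {1,…,n}). -/

import Mathlib

set_option linter.unusedSectionVars false
set_option maxHeartbeats 1000000


noncomputable section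
open scoped BigOperators

/-- The dual of a linear code `C ⊆ Rⁿ` with respect to the standard inner
product `u·v = ∑ ℓ, u ℓ * v ℓ`. -/
def dualCode {R : Type*} [CommRing R] {n : ℕ} (C : Submodule R (Fin n → R)) :
    Submodule R (Fin n → R) where
  carrier := {v | ∀ u ∈ C, ∑ ℓ, u ℓ * v ℓ = 0}
  add_mem' := by
    intro v w hv hw u hu
    simp only [Set.mem_setOf_eq] at *
    have h1 := hv u hu
    have h2 := hw u hu
    simp only [Pi.add_apply, mul_add, Finset.sum_add_distrib, h1, h2, add_zero]
  zero_mem' := by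
    intro u hu
    simp
  smul_mem' := by
    intro c v hv u hu
    simp only [Set.mem_setOf_eq] at *
    have h := hv u hu
    have : ∑ ℓ, u ℓ * (c • v) ℓ = c * ∑ ℓ, u ℓ * v ℓ := by
      rw [Finset.mul_sum]
      exact Finset.sum_congr rfl fun ℓ _ => by
        simp only [Pi.smul_apply, smul_eq_mul]; ring
    rw [this, h, mul_zero]

/-- A finite commutative ring is Frobenius iff `|C|·|C⊥| = |R|ⁿ` for every
linear code `C` of every length `n` over `R`. -/
def IsFrobeniusRing (R : Type*) [CommRing R] [Fintype R] : Prop :=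
  ∀ (n : ℕ) (C : Submodule R (Fin n → R)),
    Nat.card C * Nat.card (dualCode C) = Fintype.card R ^ n

open MvPolynomial Classical

/-- The symmetrized support enumerator
`sse_C = ∑_{c ∈ C} ∏_{ℓ} x_{i_c(ℓ), ℓ}`, where `i_c(ℓ)` is the unique index
with `c_ℓ R = a_{i_c(ℓ)} R`; the variable `X (i, ℓ)` plays the role of
`x_{iℓ}`. -/
def sse {R : Type*} [CommRing R] [Fintype R] {t n : ℕ} (a : Fin (t + 1) → R)
    (C : Submodule R (Fin n → R)) : MvPolynomial (Fin (t + 1) × Fin n) ℚ :=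
  haveI : Fintype C := Fintype.ofFinite C
  ∑ c : C, ∏ ℓ : Fin n, ∏ i : Fin (t + 1),
    if Ideal.span {(c : Fin n → R) ℓ} = Ideal.span {a i} then X (i, ℓ) else 1

namespace Stmt14Aux

open Finset in
lemma matA_inv {R : Type*} [CommRing R] {t : ℕ} (a : Fin (t+1) → R)
    (hinj : ∀ i j, Ideal.span {a i} = Ideal.span {a j} → i = j)
    (A : Matrix (Fin (t+1)) (Fin (t+1)) ℚ)
    (hA : ∀ i j, A i j = if Ideal.span {a i} ≤ Ideal.span {a j} then 1 else 0) :
    A * A⁻¹ = 1 := by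
  classical
  set f : Fin (t+1) → ℕ :=
    fun i => (univ.filter (fun j => Ideal.span {a j} ≤ Ideal.span {a i})).card with hf
  have hmono : ∀ i j, Ideal.span {a i} ≤ Ideal.span {a j} → f i ≤ f j := by
    intro i j h
    exact card_le_card (fun k hk => by
      simp only [mem_filter, mem_univ, true_and] at *
      exact le_trans hk h)
  have hstrict : ∀ i j, i ≠ j → Ideal.span {a i} ≤ Ideal.span {a j} → f i < f j := by
    intro i j hij h
    apply card_lt_card
    rw [Finset.ssubset_iff_of_subset (fun k hk => by
      simp only [mem_filter, mem_univ, true_and] at *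
      exact le_trans hk h)]
    refine ⟨j, by simp, ?_⟩
    simp only [mem_filter, mem_univ, true_and]
    intro hle
    exact hij (hinj i j (le_antisymm h hle))
  have hbt : A.BlockTriangular f := by
    intro i j hlt
    rw [hA, if_neg]
    intro h
    exact absurd (hmono _ _ h) (by omega)
  have hdet : A.det = 1 := by
    rw [hbt.det]
    refine Finset.prod_eq_one fun k _ => ?_
    have h1 : A.toSquareBlock f k = 1 := by
      ext ⟨i, hi⟩ ⟨j, hj⟩
      simp only [Matrix.toSquareBlock_def, Matrix.of_apply]
      by_cases hij : i = j
      · subst hij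
        simp [hA, Matrix.one_apply]
      · have h0 : ¬ Ideal.span {a i} ≤ Ideal.span {a j} := by
          intro hle
          have := hstrict i j hij hle
          omega
        rw [hA, if_neg h0, Matrix.one_apply_ne (fun hc => hij (congrArg Subtype.val hc))]
    rw [h1, Matrix.det_one]
  exact Matrix.mul_nonsing_inv A (by rw [hdet]; exact isUnit_one)

variable {R : Type*} [CommRing R] [Fintype R]

/-- annihilator of an ideal -/
def annI (I : Ideal R) : Ideal R where
  carrier := {x | ∀ y ∈ I, x * y = 0}
  add_mem' := fun {x y} hx hy z hz => by rw [add_mul, hx z hz, hy z hz, add_zero]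
  zero_mem' := fun z _ => zero_mul z
  smul_mem' := fun c x hx z hz => by
    rw [smul_eq_mul, mul_assoc, hx z hz, mul_zero]

lemma mem_annI {I : Ideal R} {x : R} : x ∈ annI I ↔ ∀ y ∈ I, x * y = 0 := Iff.rfl

lemma annI_antitone {I J : Ideal R} (h : I ≤ J) : annI J ≤ annI I :=
  fun _ hx y hy => hx y (h hy)

lemma eq_of_le_of_card_le {I J : Ideal R} (h : I ≤ J)
    (hc : Nat.card J ≤ Nat.card I) : I = J := by
  have hinj : Function.Injective (fun x : I => (⟨x.1, h x.2⟩ : J)) := by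
    intro x y hxy
    have h2 : (x : R) = (y : R) := congrArg (Subtype.val : J → R) hxy
    exact Subtype.ext h2
  have hcard : Nat.card I = Nat.card J :=
    le_antisymm (Nat.card_le_card_of_injective _ hinj) hc
  have hbij : Function.Bijective (fun x : I => (⟨x.1, h x.2⟩ : J)) :=
    (Nat.bijective_iff_injective_and_card _).2 ⟨hinj, hcard⟩
  refine le_antisymm h fun y hy => ?_
  obtain ⟨x, hx⟩ := hbij.2 ⟨y, hy⟩
  have : (x : R) = y := congrArg Subtype.val hx
  exact this ▸ x.2

lemma card_top : Nat.card (⊤ : Ideal R) = Fintype.card R := by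
  rw [← Nat.card_eq_fintype_card]
  exact Nat.card_congr (Submodule.topEquiv : (⊤ : Ideal R) ≃ₗ[R] R).toEquiv

/-- cardinality consequence of the Frobenius property, length-1 case -/
lemma card_mul_card_annI (hR : IsFrobeniusRing R) (I : Ideal R) :
    Nat.card I * Nat.card (annI I) = Fintype.card R := by
  classical
  set e0 : (Fin 1 → R) ≃ₗ[R] R := LinearEquiv.funUnique (Fin 1) R R with he0
  set C : Submodule R (Fin 1 → R) := Submodule.comap (e0 : (Fin 1 → R) →ₗ[R] R) I with hC
  have hCmem : ∀ u : Fin 1 → R, u ∈ C ↔ u 0 ∈ I := by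
    intro u; rfl
  have hcardC : Nat.card C = Nat.card I := by
    have : C = Submodule.map (e0.symm : R →ₗ[R] (Fin 1 → R)) I := by
      ext u
      rw [hCmem]
      constructor
      · intro hu
        exact ⟨u 0, hu, by
          ext ℓ
          have : ℓ = 0 := Subsingleton.elim _ _
          subst this; rfl⟩
      · rintro ⟨y, hy, rfl⟩
        exact hy
    rw [this]
    exact (Nat.card_congr (e0.symm.submoduleMap I).toEquiv).symm
  have hdual : ∀ v : Fin 1 → R, v ∈ dualCode C ↔ v 0 ∈ annI I := by
    intro v
    constructor
    · intro hv y hy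
      have hu : (fun _ : Fin 1 => y) ∈ C := by rw [hCmem]; exact hy
      have := hv _ hu
      rw [Fin.sum_univ_one] at this
      rw [mul_comm]; exact this
    · intro hv u hu
      rw [Fin.sum_univ_one, mul_comm]
      exact hv (u 0) ((hCmem u).1 hu)
  have hcardD : Nat.card (dualCode C) = Nat.card (annI I) := by
    have h0 : dualCode C = Submodule.comap (e0 : (Fin 1 → R) →ₗ[R] R) (annI I) := by
      ext v; exact hdual v
    rw [h0]
    have h2 : Submodule.comap (e0 : (Fin 1 → R) →ₗ[R] R) (annI I)
        = Submodule.map (e0.symm : R →ₗ[R] (Fin 1 → R)) (annI I) := by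
      ext u
      constructor
      · intro hu
        exact ⟨u 0, hu, by
          ext ℓ
          have : ℓ = 0 := Subsingleton.elim _ _
          subst this; rfl⟩
      · rintro ⟨y, hy, rfl⟩
        exact hy
    rw [h2]
    exact (Nat.card_congr ((e0.symm.submoduleMap (annI I))).toEquiv).symm
  have := hR 1 C
  rw [hcardC, hcardD, pow_one] at this
  exact this

lemma annI_annI (hR : IsFrobeniusRing R) (I : Ideal R) : annI (annI I) = I := by
  have hle : I ≤ annI (annI I) := by
    intro x hx y hy
    rw [mul_comm]
    exact hy x hx
  have h1 := card_mul_card_annI hR I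
  have h2 := card_mul_card_annI hR (annI I)
  have hpos : 0 < Nat.card (annI I) := Nat.card_pos
  have hcard : Nat.card (annI (annI I)) = Nat.card I := by
    have : Nat.card I * Nat.card (annI I)
        = Nat.card (annI I) * Nat.card (annI (annI I)) := by rw [h1, h2]
    rw [mul_comm (Nat.card (annI I))] at this
    exact (Nat.eq_of_mul_eq_mul_right hpos this.symm)
  exact (eq_of_le_of_card_le hle (le_of_eq hcard)).symm

lemma annI_ne_bot (hR : IsFrobeniusRing R) {m : Ideal R} (hm : m ≠ ⊤) :
    annI m ≠ ⊥ := by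
  intro hbot
  have h1 := card_mul_card_annI hR m
  have hcb : Nat.card (annI m) = 1 := by
    rw [hbot]
    exact Nat.card_eq_one_iff_unique.2 ⟨⟨fun x y => Subtype.ext (by
      have hx := x.2; have hy := y.2
      simp only [Ideal.mem_bot] at hx hy
      rw [hx, hy])⟩, ⟨0⟩⟩
  rw [hcb, mul_one] at h1
  exact hm (eq_of_le_of_card_le le_top (by rw [card_top, h1]))

lemma cover (hR : IsFrobeniusRing R) {s : R} (hs : s ≠ 0) :
    ∃ m : Ideal R, m.IsMaximal ∧ annI m ≤ Ideal.span {s} := by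
  have hJ : annI (Ideal.span {s}) ≠ ⊤ := by
    intro h
    have h1 : (1 : R) ∈ annI (Ideal.span {s}) := h ▸ Submodule.mem_top
    have := h1 s (Ideal.mem_span_singleton_self s)
    rw [one_mul] at this
    exact hs this
  obtain ⟨m, hmax, hJm⟩ := Ideal.exists_le_maximal _ hJ
  exact ⟨m, hmax, (annI_annI hR (Ideal.span {s})) ▸ annI_antitone hJm⟩

lemma exists_addChar {s : R} (hs : s ≠ 0) : ∃ ψ : AddChar R ℂ, ψ s ≠ 1 := by
  haveI : NeZero ((Monoid.exponent (Multiplicative R) : ℂ)) :=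
    ⟨Nat.cast_ne_zero.2 Monoid.exponent_ne_zero_of_finite⟩
  obtain ⟨φ, hφ⟩ := CommGroup.exists_apply_ne_one_of_hasEnoughRootsOfUnity
    (Multiplicative R) ℂ (a := Multiplicative.ofAdd s) (by simpa using hs)
  refine ⟨AddChar.toMonoidHomEquiv.symm ((Units.coeHom ℂ).comp φ), ?_⟩
  simp only [AddChar.toMonoidHomEquiv_symm_apply, MonoidHom.coe_comp,
    Function.comp_apply, Units.coeHom_apply]
  intro h
  exact hφ (Units.ext h)

lemma exists_gen_char (hR : IsFrobeniusRing R) :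
    ∃ χ : AddChar R ℂ, ∀ s : R, s ≠ 0 → ∃ r : R, χ (r * s) ≠ 1 := by
  classical
  haveI : Finite (Ideal R) :=
    Finite.of_injective (fun I : Ideal R => (I : Set R)) SetLike.coe_injective
  haveI := Fintype.ofFinite (Ideal R)
  set S : Finset (Ideal R) := Finset.univ.filter (fun m => m.IsMaximal) with hS
  have hmemS : ∀ m : Ideal R, m ∈ S ↔ m.IsMaximal := by
    intro m; simp [hS]
  have H : ∀ m : Ideal R, ∃ (s c : R) (ψ : AddChar R ℂ),
      m ∈ S → (s ∈ annI m ∧ ψ s ≠ 1 ∧ c ∉ m ∧ ∀ m' ∈ S, m' ≠ m → c ∈ m') := by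
    intro m
    by_cases hm : m ∈ S
    · have hmax : m.IsMaximal := (hmemS m).1 hm
      obtain ⟨s, hsmem, hs0⟩ :=
        (Submodule.ne_bot_iff _).1 (annI_ne_bot hR hmax.ne_top)
      obtain ⟨ψ, hψ⟩ := exists_addChar hs0
      have hprodnle : ¬ (∏ m' ∈ S.erase m, m') ≤ m := by
        intro hle
        obtain ⟨m', hm'S, hm'le⟩ := (Ideal.IsPrime.prod_le hmax.isPrime).1 hle
        have hm'max : m'.IsMaximal := (hmemS m').1 (Finset.mem_of_mem_erase hm'S)
        exact (Finset.ne_of_mem_erase hm'S) (hm'max.eq_of_le hmax.ne_top hm'le)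
      obtain ⟨c, hcmem, hcnot⟩ := SetLike.not_le_iff_exists.1 hprodnle
      refine ⟨s, c, ψ, fun _ => ⟨hsmem, hψ, hcnot, ?_⟩⟩
      intro m' hm' hne
      exact (Ideal.prod_le_inf.trans
        (Finset.inf_le (Finset.mem_erase.2 ⟨hne, hm'⟩))) hcmem
    · exact ⟨0, 0, 1, fun h => absurd h hm⟩
  choose fs fc fψ hprop using H
  refine ⟨⟨fun r => ∏ m ∈ S, fψ m (fc m * r), by simp, ?_⟩, ?_⟩
  · intro x y
    rw [← Finset.prod_mul_distrib]
    exact Finset.prod_congr rfl fun m _ => by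
      rw [mul_add, AddChar.map_add_eq_mul]
  · intro s hs
    obtain ⟨m, hmax, hle⟩ := cover hR hs
    have hmS : m ∈ S := (hmemS m).2 hmax
    obtain ⟨hsm, hψs, hcm, hcm'⟩ := hprop m hmS
    obtain ⟨z, i, him, hzi⟩ := hmax.exists_inv hcm
    set x := z * fs m with hxdef
    have hxann : x ∈ annI m := Ideal.mul_mem_left _ z hsm
    have hx : fc m * x = fs m := by
      have h1 : fs m * i = 0 := hsm i him
      have h2 : fc m * (z * fs m) = (z * fc m + i) * fs m - fs m * i := by ring
      rw [hxdef, h2, hzi, one_mul, h1, sub_zero]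
    have hχx : (∏ m' ∈ S, fψ m' (fc m' * x)) = fψ m (fc m * x) := by
      refine Finset.prod_eq_single m ?_ (fun h => absurd hmS h)
      intro m' hm'S hne
      have hc : fc m' ∈ m := (hprop m' hm'S).2.2.2 m hmS (Ne.symm hne)
      have hz : fc m' * x = 0 := by rw [mul_comm]; exact hxann _ hc
      rw [hz, AddChar.map_zero_eq_one]
    obtain ⟨r, hr⟩ := Ideal.mem_span_singleton'.1 (hle hxann)
    refine ⟨r, ?_⟩
    show (∏ m' ∈ S, fψ m' (fc m' * (r * s))) ≠ 1
    rw [hr, hχx, hx]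
    exact hψs

lemma addChar_sum_eq_zero {G : Type*} [AddCommGroup G] [Fintype G] (φ : AddChar G ℂ)
    (h : ∃ g, φ g ≠ 1) : ∑ g, φ g = 0 := by
  classical
  rw [AddChar.sum_eq_ite, if_neg (AddChar.ne_zero_iff.2 h)]

lemma addChar_map_sum {G ι : Type*} [AddCommGroup G] (χ : AddChar G ℂ)
    (s : Finset ι) (f : ι → G) :
    χ (∑ i ∈ s, f i) = ∏ i ∈ s, χ (f i) := by
  classical
  induction s using Finset.induction with
  | empty => simp
  | insert _ _ h ih =>
    rw [Finset.sum_insert h, Finset.prod_insert h, AddChar.map_add_eq_mul, ih]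

lemma sum_char_code {n : ℕ} (C : Submodule R (Fin n → R)) [Fintype (↥C)]
    (χ : AddChar R ℂ) (hχ : ∀ s : R, s ≠ 0 → ∃ r : R, χ (r * s) ≠ 1)
    (v : Fin n → R) :
    ∑ c : C, χ (∑ ℓ, (c : Fin n → R) ℓ * v ℓ)
      = if v ∈ dualCode C then (Nat.card C : ℂ) else 0 := by
  classical
  by_cases hv : v ∈ dualCode C
  · rw [if_pos hv]
    have h1 : ∀ c : C, χ (∑ ℓ, (c : Fin n → R) ℓ * v ℓ) = 1 := fun c => by
      rw [hv (c : Fin n → R) c.2]; exact AddChar.map_zero_eq_one χ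
    rw [Finset.sum_congr rfl (fun c _ => h1 c)]
    simp [Nat.card_eq_fintype_card, Finset.card_univ]
  · rw [if_neg hv]
    have hadd : ∀ c c' : C, (∑ ℓ, ((c + c' : C) : Fin n → R) ℓ * v ℓ)
        = (∑ ℓ, (c : Fin n → R) ℓ * v ℓ) + ∑ ℓ, (c' : Fin n → R) ℓ * v ℓ := by
      intro c c'
      rw [← Finset.sum_add_distrib]
      exact Finset.sum_congr rfl fun ℓ _ => by
        simp only [Submodule.coe_add, Pi.add_apply]; ring
    set φ : AddChar (↥C) ℂ :=
      { toFun := fun c => χ (∑ ℓ, (c : Fin n → R) ℓ * v ℓ),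
        map_zero_eq_one' := by
          simp only [Submodule.coe_zero, Pi.zero_apply, zero_mul,
            Finset.sum_const_zero]
          exact AddChar.map_zero_eq_one χ,
        map_add_eq_mul' := by
          intro c c'
          rw [hadd, AddChar.map_add_eq_mul] } with hφ
    have hnt : ∃ c : C, φ c ≠ 1 := by
      have : ¬ ∀ u ∈ C, ∑ ℓ, u ℓ * v ℓ = 0 := hv
      push_neg at this
      obtain ⟨u, huC, hs⟩ := this
      obtain ⟨r, hr⟩ := hχ _ hs
      refine ⟨⟨r • u, C.smul_mem r huC⟩, ?_⟩
      show χ (∑ ℓ, (r • u) ℓ * v ℓ) ≠ 1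
      have : ∑ ℓ, (r • u) ℓ * v ℓ = r * ∑ ℓ, u ℓ * v ℓ := by
        rw [Finset.mul_sum]
        exact Finset.sum_congr rfl fun ℓ _ => by
          simp only [Pi.smul_apply, smul_eq_mul]; ring
      rw [this]
      exact hr
    exact addChar_sum_eq_zero φ hnt

lemma sum_char_ideal (χ : AddChar R ℂ)
    (hχ : ∀ s : R, s ≠ 0 → ∃ r : R, χ (r * s) ≠ 1) (c x0 : R) :
    ∑ r : R, (if r ∈ Ideal.span {x0} then χ (c * r) else 0)
      = if c * x0 = 0 then (Nat.card (Ideal.span {x0} : Ideal R) : ℂ) else 0 := by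
  classical
  haveI : Fintype (Ideal.span {x0} : Ideal R) := Fintype.ofFinite _
  have hsub : ∑ r : R, (if r ∈ Ideal.span {x0} then χ (c * r) else 0)
      = ∑ r : (Ideal.span {x0} : Ideal R), χ (c * (r : R)) := by
    rw [← Finset.sum_filter]
    exact Finset.sum_subtype _ (by simp) _
  rw [hsub]
  by_cases h : c * x0 = 0
  · rw [if_pos h]
    have h1 : ∀ r : (Ideal.span {x0} : Ideal R), χ (c * (r : R)) = 1 := by
      intro r
      obtain ⟨u, hu⟩ := Ideal.mem_span_singleton'.1 r.2
      have h2 : c * (r : R) = u * (c * x0) := by rw [← hu]; ring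
      rw [h2, h, mul_zero]
      exact AddChar.map_zero_eq_one χ
    rw [Finset.sum_congr rfl (fun r _ => h1 r)]
    simp [Nat.card_eq_fintype_card, Finset.card_univ]
  · rw [if_neg h]
    have hadd : ∀ y z : (Ideal.span {x0} : Ideal R),
        c * ((y + z : _) : R) = c * (y : R) + c * (z : R) := by
      intro y z
      simp only [Submodule.coe_add]; ring
    set φ : AddChar (Ideal.span {x0} : Ideal R) ℂ :=
      { toFun := fun y => χ (c * (y : R)),
        map_zero_eq_one' := by
          simp only [Submodule.coe_zero, mul_zero]
          exact AddChar.map_zero_eq_one χ,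
        map_add_eq_mul' := by
          intro y z
          rw [hadd, AddChar.map_add_eq_mul] } with hφ
    have hnt : ∃ y : (Ideal.span {x0} : Ideal R), φ y ≠ 1 := by
      obtain ⟨r, hr⟩ := hχ _ h
      refine ⟨⟨r * x0, Ideal.mem_span_singleton'.2 ⟨r, rfl⟩⟩, ?_⟩
      show χ (c * (r * x0)) ≠ 1
      have : c * (r * x0) = r * (c * x0) := by ring
      rw [this]
      exact hr
    exact addChar_sum_eq_zero φ hnt

end Stmt14Aux

/-- the MacWilliams identity for the symmetrized support
enumerator, `sse_{C⊥}(X) = (1/|C|) · sse_C(Q D A⁻¹ X)`. -/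
theorem stmt14 {R : Type*} [CommRing R] [Fintype R] (hR : IsFrobeniusRing R)
    {t : ℕ} (a : Fin (t + 1) → R)
    (hrep : ∀ r : R, ∃ i, Ideal.span {r} = Ideal.span {a i})
    (hinj : ∀ i j, Ideal.span {a i} = Ideal.span {a j} → i = j)
    {n : ℕ} (C : Submodule R (Fin n → R))
    (A D Q : Matrix (Fin (t + 1)) (Fin (t + 1)) ℚ)
    (hA : ∀ i j, A i j = if Ideal.span {a i} ≤ Ideal.span {a j} then 1 else 0)
    (hD : D = Matrix.diagonal fun i => (Nat.card (Ideal.span {a i}) : ℚ))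
    (hQ : ∀ i j, Q i j =
      if ∀ r ∈ Ideal.span {a j}, a i * r = 0 then 1 else 0) :
    sse a (dualCode C) =
      MvPolynomial.C ((Nat.card C : ℚ)⁻¹) *
        (MvPolynomial.bind₁ (fun p : Fin (t + 1) × Fin n =>
          ∑ j : Fin (t + 1), MvPolynomial.C ((Q * D * A⁻¹) p.1 j) * X (j, p.2)))
          (sse a C) := by
  classical
  obtain ⟨χ, hχ⟩ := Stmt14Aux.exists_gen_char hR
  haveI instC : Fintype (↥C) := Fintype.ofFinite _
  haveI instD2 : Fintype (↥(dualCode C)) := Fintype.ofFinite _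
  set idx : R → Fin (t + 1) := fun r => Classical.choose (hrep r) with hidx
  have hspec : ∀ r : R, Ideal.span {r} = Ideal.span {a (idx r)} :=
    fun r => Classical.choose_spec (hrep r)
  have hAinv : A * A⁻¹ = 1 := Stmt14Aux.matA_inv a hinj A hA
  -- rewrite sse as a sum of monomials
  have sse_eq : ∀ (W : Submodule R (Fin n → R)) (inst : Fintype (↥W)),
      sse a W = @Finset.sum _ _ _ (@Finset.univ _ inst)
        (fun c => ∏ ℓ : Fin n, X (idx ((c : Fin n → R) ℓ), ℓ)) := by
    intro W inst
    unfold sse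
    rw [Subsingleton.elim (Fintype.ofFinite (↥W)) inst]
    refine Finset.sum_congr rfl fun c _ => Finset.prod_congr rfl fun ℓ _ => ?_
    have h1 : ∀ i : Fin (t+1),
        (Ideal.span {(c : Fin n → R) ℓ} = Ideal.span {a i})
          ↔ (idx ((c : Fin n → R) ℓ) = i) := by
      intro i
      constructor
      · intro h; exact hinj _ _ ((hspec _).symm.trans h)
      · rintro rfl; exact hspec _
    calc ∏ i : Fin (t+1), (if Ideal.span {(c : Fin n → R) ℓ} = Ideal.span {a i}
            then (X (i, ℓ) : MvPolynomial (Fin (t+1) × Fin n) ℚ) else 1)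
        = ∏ i : Fin (t+1), (if idx ((c : Fin n → R) ℓ) = i
            then (X (i, ℓ) : MvPolynomial (Fin (t+1) × Fin n) ℚ) else 1) :=
          Finset.prod_congr rfl fun i _ => if_congr (h1 i) rfl rfl
      _ = X (idx ((c : Fin n → R) ℓ), ℓ) := by
          rw [Finset.prod_ite_eq]
          simp
  -- scalar character sums
  have hQval : ∀ (c : R) (i : Fin (t + 1)),
      Q (idx c) i = if c * a i = 0 then 1 else 0 := by
    intro c i
    rw [hQ]
    by_cases h : c * a i = 0
    · rw [if_pos h, if_pos]
      intro r hr
      obtain ⟨u, hu⟩ := Ideal.mem_span_singleton'.1 hr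
      have hax : a (idx c) ∈ Ideal.span {c} := by
        rw [hspec c]; exact Ideal.mem_span_singleton_self _
      obtain ⟨w, hw⟩ := Ideal.mem_span_singleton'.1 hax
      rw [← hu, ← hw]
      calc w * c * (u * a i) = w * u * (c * a i) := by ring
        _ = 0 := by rw [h, mul_zero]
    · rw [if_neg h, if_neg]
      intro hall
      have hc : c ∈ Ideal.span {a (idx c)} := by
        rw [← hspec c]; exact Ideal.mem_span_singleton_self _
      obtain ⟨w, hw⟩ := Ideal.mem_span_singleton'.1 hc
      have := hall (a i) (Ideal.mem_span_singleton_self _)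
      apply h
      rw [← hw]
      calc w * a (idx c) * a i = w * (a (idx c) * a i) := by ring
        _ = 0 := by rw [this, mul_zero]
  have hTA : ∀ (c : R) (i : Fin (t + 1)),
      (∑ r : R, if r ∈ Ideal.span {a i} then χ (c * r) else 0)
        = ∑ j : Fin (t + 1), (A j i : ℂ) *
            (∑ r : R, if idx r = j then χ (c * r) else 0) := by
    intro c i
    have h1 : ∀ j : Fin (t+1), (A j i : ℂ) *
          (∑ r : R, if idx r = j then χ (c * r) else 0)
        = ∑ r : R, (if idx r = j then (A j i : ℂ) * χ (c * r) else 0) := by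
      intro j
      rw [Finset.mul_sum]
      exact Finset.sum_congr rfl fun r _ => by
        rw [mul_ite, mul_zero]
    rw [Finset.sum_congr rfl fun j _ => h1 j, Finset.sum_comm]
    refine Finset.sum_congr rfl fun r _ => ?_
    rw [Finset.sum_ite_eq]
    simp only [Finset.mem_univ, if_true]
    have h2 : Ideal.span {a (idx r)} ≤ Ideal.span {a i} ↔ r ∈ Ideal.span {a i} := by
      rw [← hspec r]
      constructor
      · intro hle
        exact hle (Ideal.mem_span_singleton_self r)
      · intro hmem
        exact Ideal.span_le.2 (Set.singleton_subset_iff.2 hmem)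
    rw [hA]
    by_cases h : r ∈ Ideal.span {a i}
    · rw [if_pos (h2.2 h), if_pos h]
      push_cast
      ring
    · rw [if_neg (fun hc => h (h2.1 hc)), if_neg h]
      push_cast
      ring
  have hSval : ∀ (c : R) (j : Fin (t + 1)),
      (∑ r : R, if idx r = j then χ (c * r) else 0)
        = (((Q * D * A⁻¹) (idx c) j : ℚ) : ℂ) := by
    intro c j
    have hT : ∀ i : Fin (t + 1),
        (∑ r : R, if r ∈ Ideal.span {a i} then χ (c * r) else 0)
          = ((Q (idx c) i * D i i : ℚ) : ℂ) := by
      intro i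
      rw [Stmt14Aux.sum_char_ideal χ hχ c (a i), hQval c i, hD]
      simp only [Matrix.diagonal_apply_eq]
      by_cases h : c * a i = 0
      · rw [if_pos h, if_pos h]
        push_cast
        ring
      · rw [if_neg h, if_neg h]
        push_cast
        ring
    have key : ∀ i : Fin (t+1),
        (∑ k : Fin (t+1), (A k i : ℂ) * (∑ r : R, if idx r = k then χ (c * r) else 0))
          = ((Q (idx c) i * D i i : ℚ) : ℂ) :=
      fun i => (hTA c i).symm.trans (hT i)
    have e1 : ∑ i : Fin (t+1), ((A⁻¹ i j : ℚ) : ℂ) *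
          (∑ k : Fin (t+1), (A k i : ℂ) * (∑ r : R, if idx r = k then χ (c * r) else 0))
        = (∑ r : R, if idx r = j then χ (c * r) else 0) := by
      have h3 : ∀ i : Fin (t+1), ((A⁻¹ i j : ℚ) : ℂ) *
            (∑ k : Fin (t+1), (A k i : ℂ) * (∑ r : R, if idx r = k then χ (c * r) else 0))
          = ∑ k : Fin (t+1), ((A k i * A⁻¹ i j : ℚ) : ℂ) *
              (∑ r : R, if idx r = k then χ (c * r) else 0) := by
        intro i
        rw [Finset.mul_sum]
        exact Finset.sum_congr rfl fun k _ => by push_cast; ring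
      rw [Finset.sum_congr rfl fun i _ => h3 i, Finset.sum_comm]
      have h4 : ∀ k : Fin (t+1),
          (∑ i : Fin (t+1), ((A k i * A⁻¹ i j : ℚ) : ℂ) *
            (∑ r : R, if idx r = k then χ (c * r) else 0))
          = (((A * A⁻¹) k j : ℚ) : ℂ) * (∑ r : R, if idx r = k then χ (c * r) else 0) := by
        intro k
        rw [← Finset.sum_mul, Matrix.mul_apply]
        push_cast
        ring
      rw [Finset.sum_congr rfl fun k _ => h4 k, hAinv]
      have h5 : ∀ k : Fin (t+1), (((1 : Matrix (Fin (t+1)) (Fin (t+1)) ℚ) k j : ℚ) : ℂ) *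
            (∑ r : R, if idx r = k then χ (c * r) else 0)
          = if k = j then (∑ r : R, if idx r = k then χ (c * r) else 0) else 0 := by
        intro k
        rw [Matrix.one_apply]
        by_cases h : k = j
        · rw [if_pos h, if_pos h]; push_cast; ring
        · rw [if_neg h, if_neg h]; push_cast; ring
      rw [Finset.sum_congr rfl fun k _ => h5 k, Finset.sum_ite_eq']
      simp
    have e2 : ∑ i : Fin (t+1), ((A⁻¹ i j : ℚ) : ℂ) * ((Q (idx c) i * D i i : ℚ) : ℂ)
        = (((Q * D * A⁻¹) (idx c) j : ℚ) : ℂ) := by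
      rw [Matrix.mul_apply]
      push_cast
      refine Finset.sum_congr rfl fun i _ => ?_
      rw [hD, Matrix.mul_diagonal, Matrix.diagonal_apply_eq]
      push_cast
      ring
    rw [← e1, Finset.sum_congr rfl fun i _ => by rw [key i], e2]
  -- main polynomial identity over ℚ
  have hq : (Nat.card C : ℚ) ≠ 0 :=
    Nat.cast_ne_zero.2 (Nat.card_pos).ne'
  have main : (∑ c : C, ∏ ℓ : Fin n, ∑ j : Fin (t+1),
        MvPolynomial.C ((Q * D * A⁻¹) (idx ((c : Fin n → R) ℓ)) j) * X (j, ℓ))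
      = MvPolynomial.C ((Nat.card C : ℚ)) *
          ∑ v : dualCode C, ∏ ℓ : Fin n,
            (X (idx ((v : Fin n → R) ℓ), ℓ) : MvPolynomial (Fin (t+1) × Fin n) ℚ) := by
    apply MvPolynomial.map_injective (algebraMap ℚ ℂ) ((algebraMap ℚ ℂ).injective)
    -- push the map through
    rw [map_sum, map_mul, map_C, map_sum]
    have hcast : algebraMap ℚ ℂ ((Nat.card C : ℚ)) = ((Nat.card C : ℕ) : ℂ) := by
      push_cast; norm_num
    have hmapL : ∀ c : C, MvPolynomial.map (algebraMap ℚ ℂ)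
          (∏ ℓ : Fin n, ∑ j : Fin (t+1),
            MvPolynomial.C ((Q * D * A⁻¹) (idx ((c : Fin n → R) ℓ)) j) * X (j, ℓ))
        = ∏ ℓ : Fin n, ∑ j : Fin (t+1),
            MvPolynomial.C ((((Q * D * A⁻¹) (idx ((c : Fin n → R) ℓ)) j : ℚ) : ℂ)) * X (j, ℓ) := by
      intro c
      rw [map_prod]
      refine Finset.prod_congr rfl fun ℓ _ => ?_
      rw [map_sum]
      refine Finset.sum_congr rfl fun j _ => ?_
      rw [map_mul, map_C, map_X, eq_ratCast]
    have hmapR : ∀ v : dualCode C, MvPolynomial.map (algebraMap ℚ ℂ)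
          (∏ ℓ : Fin n, (X (idx ((v : Fin n → R) ℓ), ℓ) : MvPolynomial (Fin (t+1) × Fin n) ℚ))
        = ∏ ℓ : Fin n, (X (idx ((v : Fin n → R) ℓ), ℓ) : MvPolynomial (Fin (t+1) × Fin n) ℂ) := by
      intro v
      rw [map_prod]
      exact Finset.prod_congr rfl fun ℓ _ => map_X _ _
    rw [Finset.sum_congr rfl fun c _ => hmapL c, Finset.sum_congr rfl fun v _ => hmapR v, hcast]
    -- now the ℂ-coefficient identity
    -- Step B: replace coefficient sums by character sums
    have hF : ∀ (c0 : R) (ℓ : Fin n),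
        (∑ j : Fin (t+1), MvPolynomial.C ((((Q * D * A⁻¹) (idx c0) j : ℚ) : ℂ)) * X (j, ℓ))
          = ∑ r : R, MvPolynomial.C (χ (c0 * r)) *
              (X (idx r, ℓ) : MvPolynomial (Fin (t+1) × Fin n) ℂ) := by
      intro c0 ℓ
      have h1 : ∀ r : R, MvPolynomial.C (χ (c0 * r)) *
            (X (idx r, ℓ) : MvPolynomial (Fin (t+1) × Fin n) ℂ)
          = ∑ j : Fin (t+1), (if idx r = j
              then MvPolynomial.C (χ (c0 * r)) * X (j, ℓ) else 0) := by
        intro r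
        rw [Finset.sum_ite_eq]
        simp
      rw [Finset.sum_congr rfl fun r _ => h1 r, Finset.sum_comm]
      refine Finset.sum_congr rfl fun j _ => ?_
      have h2 : (∑ r : R, if idx r = j
            then MvPolynomial.C (χ (c0 * r)) * (X (j, ℓ) : MvPolynomial (Fin (t+1) × Fin n) ℂ) else 0)
          = MvPolynomial.C (∑ r : R, if idx r = j then χ (c0 * r) else 0) * X (j, ℓ) := by
        rw [map_sum, Finset.sum_mul]
        refine Finset.sum_congr rfl fun r _ => ?_
        by_cases h : idx r = j
        · rw [if_pos h, if_pos h]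
        · rw [if_neg h, if_neg h, map_zero, zero_mul]
      rw [h2, hSval c0 j]
    have hFprod : ∀ c : C,
        (∏ ℓ : Fin n, ∑ j : Fin (t+1),
            MvPolynomial.C ((((Q * D * A⁻¹) (idx ((c : Fin n → R) ℓ)) j : ℚ) : ℂ)) * X (j, ℓ))
          = ∏ ℓ : Fin n, ∑ r : R, MvPolynomial.C (χ ((c : Fin n → R) ℓ * r)) *
              (X (idx r, ℓ) : MvPolynomial (Fin (t+1) × Fin n) ℂ) :=
      fun c => Finset.prod_congr rfl fun ℓ _ => hF ((c : Fin n → R) ℓ) ℓ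
    rw [Finset.sum_congr rfl fun c _ => hFprod c]
    -- Step A: Poisson summation
    have hprod : ∀ c : C,
        (∏ ℓ : Fin n, ∑ r : R, MvPolynomial.C (χ ((c : Fin n → R) ℓ * r)) *
            (X (idx r, ℓ) : MvPolynomial (Fin (t+1) × Fin n) ℂ))
          = ∑ v : Fin n → R, MvPolynomial.C (χ (∑ ℓ, (c : Fin n → R) ℓ * v ℓ)) *
              ∏ ℓ : Fin n, X (idx (v ℓ), ℓ) := by
      intro c
      rw [Fintype.prod_sum (κ := fun _ : Fin n => R)
        (f := fun ℓ r => MvPolynomial.C (χ ((c : Fin n → R) ℓ * r)) *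
          (X (idx r, ℓ) : MvPolynomial (Fin (t+1) × Fin n) ℂ))]
      refine Finset.sum_congr rfl fun v _ => ?_
      rw [Finset.prod_mul_distrib, ← map_prod (MvPolynomial.C : ℂ →+* MvPolynomial (Fin (t+1) × Fin n) ℂ),
        ← Stmt14Aux.addChar_map_sum]
    rw [Finset.sum_congr rfl fun c _ => hprod c, Finset.sum_comm]
    have hinner : ∀ v : Fin n → R,
        (∑ c : C, MvPolynomial.C (χ (∑ ℓ, (c : Fin n → R) ℓ * v ℓ)) *
            ∏ ℓ : Fin n, (X (idx (v ℓ), ℓ) : MvPolynomial (Fin (t+1) × Fin n) ℂ))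
          = (if v ∈ dualCode C then MvPolynomial.C ((Nat.card C : ℂ)) else 0) *
              ∏ ℓ : Fin n, X (idx (v ℓ), ℓ) := by
      intro v
      rw [← Finset.sum_mul, ← map_sum, Stmt14Aux.sum_char_code C χ hχ v]
      congr 1
      by_cases h : v ∈ dualCode C
      · rw [if_pos h, if_pos h]
      · rw [if_neg h, if_neg h, map_zero]
    rw [Finset.sum_congr rfl fun v _ => hinner v]
    have hsplit : ∀ v : Fin n → R,
        (if v ∈ dualCode C then MvPolynomial.C ((Nat.card C : ℂ)) else 0) *
            (∏ ℓ : Fin n, (X (idx (v ℓ), ℓ) : MvPolynomial (Fin (t+1) × Fin n) ℂ))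
          = (if v ∈ dualCode C then MvPolynomial.C ((Nat.card C : ℂ)) *
              ∏ ℓ : Fin n, X (idx (v ℓ), ℓ) else 0) := by
      intro v
      by_cases h : v ∈ dualCode C
      · rw [if_pos h, if_pos h]
      · rw [if_neg h, if_neg h, zero_mul]
    rw [Finset.sum_congr rfl fun v _ => hsplit v, ← Finset.sum_filter]
    rw [Finset.sum_subtype (Finset.univ.filter (fun v : Fin n → R => v ∈ dualCode C))
      (p := fun v : Fin n → R => v ∈ dualCode C) (by simp)
      (fun v => MvPolynomial.C ((Nat.card C : ℂ)) *
        ∏ ℓ : Fin n, (X (idx (v ℓ), ℓ) : MvPolynomial (Fin (t+1) × Fin n) ℂ))]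
    rw [← Finset.mul_sum]
  -- finish
  rw [sse_eq (dualCode C) instD2, sse_eq C instC]
  simp only [map_sum, map_prod, bind₁_X_right]
  rw [main, ← mul_assoc, ← map_mul, inv_mul_cancel₀ hq, map_one, one_mul]


end
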